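/- Let μ be a probability density on ℝ^d, and let f, h be nonnegative functions with Z_f = ∫ f μ > 0 and Z_h = ∫ h μ > 0, defining normalized densities π = fμ/Z_f and p = hμ/Z_h. Then the squared Hellinger distance satisfies D_H(π,p)² ≤ (2/Z_f)·‖√f − √h‖²_{2,μ}. -/

import Mathlib

open MeasureTheory

/-- For normalized densities `π = fμ/Z_f` and `p = hμ/Z_h`, the squared
Hellinger distance satisfies `D_H(π,p)² ≤ (2/Z_f)·‖√f − √h‖²_{2,μ}`. -/
theorem stmt_4 {d : ℕ} (μ f h : (Fin d → ℝ) → ℝ)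
    (hμ0 : ∀ x, 0 ≤ μ x) (hμ1 : ∫ x, μ x = 1)
    (hf0 : ∀ x, 0 ≤ f x) (hh0 : ∀ x, 0 ≤ h x)
    (Zf Zh : ℝ) (hZf : Zf = ∫ x, f x * μ x) (hZh : Zh = ∫ x, h x * μ x)
    (hZf0 : 0 < Zf) (hZh0 : 0 < Zh)
    (hfi : Integrable (fun x => f x * μ x)) (hhi : Integrable (fun x => h x * μ x))
    (hd : Integrable (fun x => (Real.sqrt (f x) - Real.sqrt (h x)) ^ 2 * μ x))
    (hHint : Integrable
      (fun x => (Real.sqrt (f x * μ x / Zf) - Real.sqrt (h x * μ x / Zh)) ^ 2)) :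
    (1 / 2) * ∫ x, (Real.sqrt (f x * μ x / Zf) - Real.sqrt (h x * μ x / Zh)) ^ 2 ≤
      (2 / Zf) * ∫ x, (Real.sqrt (f x) - Real.sqrt (h x)) ^ 2 * μ x := by
  set F : (Fin d → ℝ) → ℝ := fun x => Real.sqrt (f x * μ x) with hF
  set H : (Fin d → ℝ) → ℝ := fun x => Real.sqrt (h x * μ x) with hHdef
  have hfμ0 : ∀ x, 0 ≤ f x * μ x := fun x => mul_nonneg (hf0 x) (hμ0 x)
  have hhμ0 : ∀ x, 0 ≤ h x * μ x := fun x => mul_nonneg (hh0 x) (hμ0 x)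
  have sqF : ∀ x, F x ^ 2 = f x * μ x := fun x => Real.sq_sqrt (hfμ0 x)
  have sqH : ∀ x, H x ^ 2 = h x * μ x := fun x => Real.sq_sqrt (hhμ0 x)
  -- pointwise identities
  have subFH : ∀ x, F x - H x = (Real.sqrt (f x) - Real.sqrt (h x)) * Real.sqrt (μ x) := by
    intro x
    simp only [hF, hHdef, Real.sqrt_mul (hf0 x), Real.sqrt_mul (hh0 x)]
    ring
  have key2 : ∀ x, (F x - H x) ^ 2 = (Real.sqrt (f x) - Real.sqrt (h x)) ^ 2 * μ x := by
    intro x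
    rw [subFH x, mul_pow, Real.sq_sqrt (hμ0 x)]
  have keyFH : ∀ x, F x * H x =
      (f x * μ x + h x * μ x - (Real.sqrt (f x) - Real.sqrt (h x)) ^ 2 * μ x) / 2 := by
    intro x
    have e1 : Real.sqrt (f x) ^ 2 = f x := Real.sq_sqrt (hf0 x)
    have e2 : Real.sqrt (h x) ^ 2 = h x := Real.sq_sqrt (hh0 x)
    have e3 : Real.sqrt (μ x) * Real.sqrt (μ x) = μ x := Real.mul_self_sqrt (hμ0 x)
    simp only [hF, hHdef, Real.sqrt_mul (hf0 x), Real.sqrt_mul (hh0 x)]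
    linear_combination (Real.sqrt (f x) * Real.sqrt (h x)) * e3 + (μ x / 2) * e1 + (μ x / 2) * e2
  -- measurability / integrability
  have asmF : AEStronglyMeasurable F (volume : Measure (Fin d → ℝ)) :=
    Real.continuous_sqrt.comp_aestronglyMeasurable hfi.aestronglyMeasurable
  have asmH : AEStronglyMeasurable H (volume : Measure (Fin d → ℝ)) :=
    Real.continuous_sqrt.comp_aestronglyMeasurable hhi.aestronglyMeasurable
  have memF : MemLp F 2 (volume : Measure (Fin d → ℝ)) := by
    rw [memLp_two_iff_integrable_sq asmF]
    exact hfi.congr (Filter.Eventually.of_forall fun x => (sqF x).symm)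
  have memH : MemLp H 2 (volume : Measure (Fin d → ℝ)) := by
    rw [memLp_two_iff_integrable_sq asmH]
    exact hhi.congr (Filter.Eventually.of_forall fun x => (sqH x).symm)
  have intFH : Integrable (fun x => F x * H x) := by
    have : Integrable (fun x =>
        (f x * μ x + h x * μ x - (Real.sqrt (f x) - Real.sqrt (h x)) ^ 2 * μ x) / 2) :=
      ((hfi.add hhi).sub hd).div_const 2
    exact this.congr (Filter.Eventually.of_forall fun x => (keyFH x).symm)
  -- integrals
  have intF2 : ∫ x, F x ^ 2 = Zf := by
    rw [hZf]; exact integral_congr_ae (Filter.Eventually.of_forall fun x => sqF x)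
  have intH2 : ∫ x, H x ^ 2 = Zh := by
    rw [hZh]; exact integral_congr_ae (Filter.Eventually.of_forall fun x => sqH x)
  set I : ℝ := ∫ x, (Real.sqrt (f x) - Real.sqrt (h x)) ^ 2 * μ x with hI
  have I_nonneg : 0 ≤ I :=
    integral_nonneg fun x => mul_nonneg (sq_nonneg _) (hμ0 x)
  -- Cauchy–Schwarz
  have hconj : Real.HolderConjugate 2 2 := Real.HolderConjugate.two_two
  have CS : ∫ x, F x * H x ≤ Real.sqrt Zf * Real.sqrt Zh := by
    have := integral_mul_le_Lp_mul_Lq_of_nonneg (μ := (volume : Measure (Fin d → ℝ))) hconj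
      (Filter.Eventually.of_forall fun x => Real.sqrt_nonneg _)
      (Filter.Eventually.of_forall fun x => Real.sqrt_nonneg _)
      (by simpa using memF) (by simpa using memH)
    have h2 : ∀ (g : (Fin d → ℝ) → ℝ), (∫ x, g x ^ (2 : ℝ)) = ∫ x, g x ^ 2 := by
      intro g; congr 1; funext x
      rw [show (2 : ℝ) = ((2 : ℕ) : ℝ) by norm_num, Real.rpow_natCast]
    rw [h2 F, h2 H, intF2, intH2] at this
    calc ∫ x, F x * H x ≤ Zf ^ (1 / (2:ℝ)) * Zh ^ (1 / (2:ℝ)) := this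
      _ = Real.sqrt Zf * Real.sqrt Zh := by
          rw [Real.sqrt_eq_rpow, Real.sqrt_eq_rpow]
  -- I = Zf + Zh - 2 ∫ F H
  have I_eq : I = Zf + Zh - 2 * ∫ x, F x * H x := by
    have expand : ∀ x, (Real.sqrt (f x) - Real.sqrt (h x)) ^ 2 * μ x =
        F x ^ 2 + H x ^ 2 - 2 * (F x * H x) := by
      intro x
      rw [← key2 x, sub_sq]; ring
    have intF2' : Integrable (fun x => F x ^ 2) := memF.integrable_sq
    have intH2' : Integrable (fun x => H x ^ 2) := memH.integrable_sq
    have intadd : Integrable (fun x => F x ^ 2 + H x ^ 2) := intF2'.add intH2'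
    rw [hI]
    rw [integral_congr_ae (Filter.Eventually.of_forall expand)]
    rw [integral_sub intadd (intFH.const_mul 2), integral_add intF2' intH2',
      integral_const_mul, intF2, intH2]
  have D : (Real.sqrt Zf - Real.sqrt Zh) ^ 2 ≤ I := by
    have e1 : Real.sqrt Zf ^ 2 = Zf := Real.sq_sqrt hZf0.le
    have e2 : Real.sqrt Zh ^ 2 = Zh := Real.sq_sqrt hZh0.le
    nlinarith [CS, I_eq]
  -- pointwise bound for the Hellinger integrand
  have sZf : (0:ℝ) < Real.sqrt Zf := Real.sqrt_pos.mpr hZf0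
  have sZh : (0:ℝ) < Real.sqrt Zh := Real.sqrt_pos.mpr hZh0
  set c : ℝ := 1 / Real.sqrt Zf - 1 / Real.sqrt Zh with hc
  have ptw : ∀ x, (Real.sqrt (f x * μ x / Zf) - Real.sqrt (h x * μ x / Zh)) ^ 2 ≤
      (2 / Zf) * ((Real.sqrt (f x) - Real.sqrt (h x)) ^ 2 * μ x) + (2 * c ^ 2) * (h x * μ x) := by
    intro x
    rw [Real.sqrt_div (hfμ0 x), Real.sqrt_div (hhμ0 x)]
    have habc : F x / Real.sqrt Zf - H x / Real.sqrt Zh =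
        (F x - H x) / Real.sqrt Zf + H x * c := by
      rw [hc]; ring
    have step : ((F x - H x) / Real.sqrt Zf + H x * c) ^ 2 ≤
        2 * ((F x - H x) / Real.sqrt Zf) ^ 2 + 2 * (H x * c) ^ 2 := by
      nlinarith [sq_nonneg ((F x - H x) / Real.sqrt Zf - H x * c)]
    have e1 : Real.sqrt Zf ^ 2 = Zf := Real.sq_sqrt hZf0.le
    calc (F x / Real.sqrt Zf - H x / Real.sqrt Zh) ^ 2
        = ((F x - H x) / Real.sqrt Zf + H x * c) ^ 2 := by rw [habc]
      _ ≤ 2 * ((F x - H x) / Real.sqrt Zf) ^ 2 + 2 * (H x * c) ^ 2 := step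
      _ = (2 / Zf) * ((Real.sqrt (f x) - Real.sqrt (h x)) ^ 2 * μ x)
            + (2 * c ^ 2) * (h x * μ x) := by
          rw [div_pow, e1, key2 x, mul_pow, sqH x]; ring
  -- integrate the pointwise bound
  have rhs_int : Integrable (fun x =>
      (2 / Zf) * ((Real.sqrt (f x) - Real.sqrt (h x)) ^ 2 * μ x) + (2 * c ^ 2) * (h x * μ x)) :=
    (hd.const_mul _).add (hhi.const_mul _)
  have main : (∫ x, (Real.sqrt (f x * μ x / Zf) - Real.sqrt (h x * μ x / Zh)) ^ 2) ≤
      (2 / Zf) * I + (2 * c ^ 2) * Zh := by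
    calc (∫ x, (Real.sqrt (f x * μ x / Zf) - Real.sqrt (h x * μ x / Zh)) ^ 2)
        ≤ ∫ x, ((2 / Zf) * ((Real.sqrt (f x) - Real.sqrt (h x)) ^ 2 * μ x)
            + (2 * c ^ 2) * (h x * μ x)) := integral_mono hHint rhs_int ptw
      _ = (2 / Zf) * I + (2 * c ^ 2) * Zh := by
          rw [integral_add (hd.const_mul _) (hhi.const_mul _), integral_const_mul,
            integral_const_mul, ← hI, ← hZh]
  -- c² Zh = (√Zf - √Zh)²/Zf
  have cZh : c ^ 2 * Zh = (Real.sqrt Zf - Real.sqrt Zh) ^ 2 / Zf := by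
    have e1 : Real.sqrt Zf ^ 2 = Zf := Real.sq_sqrt hZf0.le
    have e2 : Real.sqrt Zh ^ 2 = Zh := Real.sq_sqrt hZh0.le
    have hcform : c = (Real.sqrt Zh - Real.sqrt Zf) / (Real.sqrt Zf * Real.sqrt Zh) := by
      rw [hc]; field_simp
    rw [hcform, div_pow, mul_pow, e1, e2]
    field_simp
    ring
  have dle : (Real.sqrt Zf - Real.sqrt Zh) ^ 2 / Zf ≤ I / Zf := by
    gcongr
  have hZfinv : (0:ℝ) ≤ 1 / Zf := by positivity
  have hfin : (2 * c ^ 2) * Zh ≤ 2 * (I / Zf) := by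
    have := le_trans (le_of_eq cZh) dle
    linarith
  calc (1 / 2) * ∫ x, (Real.sqrt (f x * μ x / Zf) - Real.sqrt (h x * μ x / Zh)) ^ 2
      ≤ (1 / 2) * ((2 / Zf) * I + (2 * c ^ 2) * Zh) := by linarith [main]
    _ ≤ (1 / 2) * ((2 / Zf) * I + 2 * (I / Zf)) := by linarith
    _ = (2 / Zf) * I := by field_simp; ring
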